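/- Suppose 0 < c₁ < 2 and c₂ < c₁ − 2·(1 − log(2/c₁)). Then there exist real numbers t̲ and t̄ with 0 ≤ t̲ < t* < t̄, where t* = (2/D)·log(2/c₁), such that h(t̲) = h(t̄) = 0 and, for every t ≥ 0, h(t) ≤ 0 if and only if t̲ ≤ t ≤ t̄. -/

import Mathlib

theorem h_nonpositive_interval
    (D c₁ c₂ : ℝ) (hD : 0 < D) (hc₁ : 0 < c₁) (hc₂ : 0 ≤ c₂)
    (h : ℝ → ℝ) (hh : ∀ t, h t = Real.exp (t * D / 2) - 1 - (t * D - c₂) / c₁)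
    (hc₁2 : c₁ < 2)
    (hcond : c₂ < c₁ - 2 * (1 - Real.log (2 / c₁)))
    (tstar : ℝ) (htstar : tstar = (2 / D) * Real.log (2 / c₁)) :
    ∃ tlow thigh : ℝ, 0 ≤ tlow ∧ tlow < tstar ∧ tstar < thigh ∧
      h tlow = 0 ∧ h thigh = 0 ∧
      ∀ t : ℝ, 0 ≤ t → (h t ≤ 0 ↔ tlow ≤ t ∧ t ≤ thigh) := by
  have hc₁0 : c₁ ≠ 0 := ne_of_gt hc₁
  have hL : 0 < Real.log (2 / c₁) := Real.log_pos (by rw [lt_div_iff₀ hc₁]; linarith)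
  have htstar0 : 0 < tstar := by
    rw [htstar]; positivity
  -- strict convexity
  have hconv : StrictConvexOn ℝ Set.univ h := by
    refine ⟨convex_univ, ?_⟩
    intro x _ y _ hxy a b ha hb hab
    have hne : x * D / 2 ≠ y * D / 2 := by
      intro e; apply hxy; have e' : (x - y) * D = 0 := by linarith
      rcases mul_eq_zero.mp e' with e|e <;> linarith
    have key := strictConvexOn_exp.2 (Set.mem_univ (x * D / 2)) (Set.mem_univ (y * D / 2)) hne ha hb hab
    simp only [smul_eq_mul] at key ⊢
    rw [hh, hh, hh]
    have e1 : (a * x + b * y) * D / 2 = a * (x * D / 2) + b * (y * D / 2) := by ring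
    rw [e1]
    have h2 : ((a * x + b * y) * D - c₂) / c₁ =
        a * ((x * D - c₂) / c₁) + b * ((y * D - c₂) / c₁) := by
      field_simp; ring_nf; nlinarith [hab]
    rw [h2]; linarith
  -- continuity
  have hcont : Continuous h := by
    have : h = fun t => Real.exp (t * D / 2) - 1 - (t * D - c₂) / c₁ := funext hh
    rw [this]; continuity
  -- h at tstar
  have hts : h tstar < 0 := by
    rw [hh, htstar]
    have e1 : (2 / D * Real.log (2 / c₁)) * D / 2 = Real.log (2 / c₁) := by
      field_simp
    rw [e1, Real.exp_log (by positivity)]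
    have e2 : (2 / D * Real.log (2 / c₁)) * D = 2 * Real.log (2 / c₁) := by
      field_simp
    rw [e2]
    have e3 : 2 / c₁ - 1 - (2 * Real.log (2 / c₁) - c₂) / c₁
        = (2 - c₁ - 2 * Real.log (2 / c₁) + c₂) / c₁ := by
      field_simp; ring
    rw [e3]
    apply div_neg_of_neg_of_pos _ hc₁
    linarith
  -- h at 0
  have h0 : 0 ≤ h 0 := by
    have e : h 0 = c₂ / c₁ := by rw [hh]; simp; ring
    rw [e]; positivity
  -- lower root
  have hsub := intermediate_value_Icc' (le_of_lt htstar0) hcont.continuousOn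
  obtain ⟨tlow, htlowmem, htlow⟩ := hsub ⟨le_of_lt hts, h0⟩
  -- upper bound point
  obtain ⟨T, hTgt, hTpos⟩ : ∃ T, tstar < T ∧ 0 < h T := by
    have h16 : (0:ℝ) < 16 / (c₁ * D) := by positivity
    refine ⟨tstar + 16 / (c₁ * D), by linarith, ?_⟩
    rw [hh]
    set x := (tstar + 16 / (c₁ * D)) * D / 2 with hxdef
    have hx2 : (tstar + 16 / (c₁ * D)) * D = 2 * x := by rw [hxdef]; ring
    rw [hx2]
    have hxge : 8 ≤ x * c₁ := by
      have e1 : x = tstar * D / 2 + 8 / c₁ := by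
        rw [hxdef]; field_simp; ring
      have e2 : 0 ≤ tstar * D / 2 := by positivity
      rw [e1, add_mul, div_mul_cancel₀ _ hc₁0]
      nlinarith [mul_nonneg e2 hc₁.le]
    have hxpos : 0 < x := by nlinarith
    have hq : (1 + x / 2) ^ 2 ≤ Real.exp x := by
      have h1 : x / 2 + 1 ≤ Real.exp (x / 2) := Real.add_one_le_exp _
      have h2 : Real.exp x = Real.exp (x / 2) * Real.exp (x / 2) := by
        rw [← Real.exp_add]; ring_nf
      nlinarith [Real.exp_pos (x / 2)]
    have hb1 : (2 * x - c₂) / c₁ ≤ 2 * x / c₁ := by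
      gcongr
      linarith
    have hb2 : 2 * x / c₁ ≤ x * x / 4 := by
      rw [div_le_iff₀ hc₁]; nlinarith
    nlinarith
  have hsub2 := intermediate_value_Icc (le_of_lt hTgt) hcont.continuousOn
  obtain ⟨thigh, hthighmem, hthigh⟩ := hsub2 ⟨le_of_lt hts, le_of_lt hTpos⟩
  have htlow_lt : tlow < tstar := lt_of_le_of_ne htlowmem.2 (fun e => by rw [e] at htlow; linarith)
  have hthigh_gt : tstar < thigh := lt_of_le_of_ne hthighmem.1 (fun e => by rw [← e] at hthigh; linarith)
  refine ⟨tlow, thigh, htlowmem.1, htlow_lt, hthigh_gt, htlow, hthigh, ?_⟩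
  intro t ht
  constructor
  · intro hht
    by_contra hcon
    push_neg at hcon
    rcases lt_or_ge t tlow with h1 | h1
    · have hne : t ≠ tstar := ne_of_lt (h1.trans htlow_lt)
      have hmem : tlow ∈ openSegment ℝ t tstar := by
        rw [openSegment_eq_Ioo (h1.trans htlow_lt)]; exact ⟨h1, htlow_lt⟩
      have hlt := hconv.lt_on_openSegment (Set.mem_univ t) (Set.mem_univ tstar) hne hmem
      rw [htlow] at hlt
      rcases lt_max_iff.mp hlt with c | c <;> linarith
    · have h2 := hcon h1
      have hne : tstar ≠ t := ne_of_lt (hthigh_gt.trans h2)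
      have hmem : thigh ∈ openSegment ℝ tstar t := by
        rw [openSegment_eq_Ioo (hthigh_gt.trans h2)]; exact ⟨hthigh_gt, h2⟩
      have hlt := hconv.lt_on_openSegment (Set.mem_univ tstar) (Set.mem_univ t) hne hmem
      rw [hthigh] at hlt
      rcases lt_max_iff.mp hlt with c | c <;> linarith
  · rintro ⟨h1, h2⟩
    have hmem : t ∈ segment ℝ tlow thigh := by
      rw [segment_eq_Icc (h1.trans h2)]; exact ⟨h1, h2⟩
    have hle := hconv.convexOn.le_on_segment (Set.mem_univ tlow) (Set.mem_univ thigh) hmem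
    rw [htlow, hthigh] at hle
    simpa using hle
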